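/- For all integers n ≥ 1, k ≥ 1, and m ≥ 0, Σ_{j=0}^{k} C(k,j)·(−1)^j·j^m·e^{−(n/k)·j} = (1 − e^{−n/k})^k · Σ_{l=0}^{min(m,k)} Stirling(m,l)·C(k,l)·l!·(−Λ)^l, with the convention 0^0 = 1. -/

import Mathlib

open Finset

/-- Stirling numbers of the second kind (as real numbers), via the sieve formula
`Stirling(m,l) = (1/l!)·Σ_{j=0}^{l} (−1)^j·C(l,j)·(l−j)^m`. -/
noncomputable def stirling2 (m l : ℕ) : ℝ :=
  (Nat.factorial l : ℝ)⁻¹ *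
    ∑ j ∈ Finset.range (l + 1), (-1 : ℝ) ^ j * (l.choose j : ℝ) * ((l : ℝ) - j) ^ m

lemma alt_sum_pow_eq_zero : ∀ (m l : ℕ), m < l →
    ∑ r ∈ range (l+1), (-1:ℝ)^r * (l.choose r : ℝ) * (r:ℝ)^m = 0 := by
  intro m
  induction m using Nat.strong_induction_on with
  | _ m IH =>
    intro l hl
    match m, l, hl with
    | 0, l+1, _ =>
      have hz : ∑ i ∈ range (l+1+1), (-1:ℤ)^i * ((l+1).choose i : ℤ) = 0 :=
        Int.alternating_sum_range_choose_of_ne (Nat.succ_ne_zero l)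
      have := congrArg (fun z : ℤ => (z : ℝ)) hz
      push_cast at this
      simpa using this
    | m+1, l+1, hl =>
      have hml : m < l := Nat.lt_of_succ_lt_succ hl
      rw [Finset.sum_range_succ']
      simp only [Nat.cast_zero, ne_eq, Nat.succ_ne_zero, not_false_iff, zero_pow, mul_zero,
        add_zero]
      have hterm : ∀ s ∈ range (l+1),
          (-1:ℝ)^(s+1) * ((l+1).choose (s+1) : ℝ) * ((s:ℝ)+1)^(m+1)
          = ∑ t ∈ range (m+1),
              (-((l:ℝ)+1)) * (m.choose t : ℝ) * ((-1:ℝ)^s * (l.choose s : ℝ) * (s:ℝ)^t) := by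
        intro s _
        have hc : ((l+1).choose (s+1) : ℝ) * ((s:ℝ)+1) = ((l:ℝ)+1) * (l.choose s : ℝ) := by
          have := Nat.add_one_mul_choose_eq l s
          have : ((l+1) * l.choose s : ℕ) = ((l+1).choose (s+1) * (s+1) : ℕ) := this
          have := congrArg (fun z : ℕ => (z : ℝ)) this
          push_cast at this
          linarith
        have hpow : ((s:ℝ)+1)^m = ∑ t ∈ range (m+1), (s:ℝ)^t * (m.choose t : ℝ) := by
          have := add_pow (s:ℝ) 1 m
          simpa using this
        calc (-1:ℝ)^(s+1) * ((l+1).choose (s+1) : ℝ) * ((s:ℝ)+1)^(m+1)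
            = (-1:ℝ)^s * (-1) * (((l+1).choose (s+1) : ℝ) * ((s:ℝ)+1)) * ((s:ℝ)+1)^m := by
              rw [pow_succ, pow_succ]; ring
          _ = (-1:ℝ)^s * (-1) * (((l:ℝ)+1) * (l.choose s : ℝ)) * ((s:ℝ)+1)^m := by rw [hc]
          _ = ∑ t ∈ range (m+1),
              (-((l:ℝ)+1)) * (m.choose t : ℝ) * ((-1:ℝ)^s * (l.choose s : ℝ) * (s:ℝ)^t) := by
              rw [hpow, Finset.mul_sum]
              exact Finset.sum_congr rfl fun t _ => by ring
      push_cast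
      rw [Finset.sum_congr rfl hterm, Finset.sum_comm]
      apply Finset.sum_eq_zero
      intro t ht
      rw [← Finset.mul_sum]
      have : ∑ s ∈ range (l+1), (-1:ℝ)^s * (l.choose s : ℝ) * (s:ℝ)^t = 0 :=
        IH t (Nat.lt_succ_of_le (Nat.lt_succ_iff.mp (mem_range.mp ht)))
          l (lt_of_le_of_lt (Nat.lt_succ_iff.mp (mem_range.mp ht)) hml)
      rw [this, mul_zero]

lemma sieve_reflect (m l : ℕ) :
    ∑ j ∈ range (l+1), (-1:ℝ)^j * (l.choose j : ℝ) * ((l:ℝ) - j)^m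
      = (-1:ℝ)^l * ∑ r ∈ range (l+1), (-1:ℝ)^r * (l.choose r : ℝ) * (r:ℝ)^m := by
  rw [Finset.mul_sum]
  rw [← Finset.sum_range_reflect (fun j => (-1:ℝ)^j * (l.choose j : ℝ) * ((l:ℝ) - j)^m) (l+1)]
  apply Finset.sum_congr rfl
  intro r hr
  have hrl : r ≤ l := Nat.lt_succ_iff.mp (mem_range.mp hr)
  have h0 : l + 1 - 1 - r = l - r := by omega
  rw [h0]
  have hcs : l.choose (l - r) = l.choose r := Nat.choose_symm hrl
  have hcast : ((l - r : ℕ) : ℝ) = (l : ℝ) - r := by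
    push_cast [Nat.cast_sub hrl]; ring
  have hsub : (l : ℝ) - ((l : ℝ) - r) = r := by ring
  have hsgn : (-1:ℝ) ^ (l - r) = (-1:ℝ)^l * (-1:ℝ)^r := by
    have h1 : (-1:ℝ) ^ (l - r) * (-1:ℝ)^r = (-1:ℝ)^l := by
      rw [← pow_add, Nat.sub_add_cancel hrl]
    have h2 : (-1:ℝ)^r * (-1:ℝ)^r = 1 := by
      rw [← mul_pow]; norm_num
    calc (-1:ℝ) ^ (l - r) = (-1:ℝ) ^ (l - r) * ((-1:ℝ)^r * (-1:ℝ)^r) := by rw [h2, mul_one]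
      _ = ((-1:ℝ) ^ (l - r) * (-1:ℝ)^r) * (-1:ℝ)^r := by ring
      _ = (-1:ℝ)^l * (-1:ℝ)^r := by rw [h1]
  rw [hcs, hcast, hsub, hsgn]
  ring

lemma stirling2_eq_zero {m l : ℕ} (h : m < l) : stirling2 m l = 0 := by
  rw [stirling2, sieve_reflect, alt_sum_pow_eq_zero m l h, mul_zero, mul_zero]

lemma innerBinSum (x : ℝ) (k r : ℕ) (hr : r ≤ k) :
    ∑ l ∈ range (k+1), (k.choose l : ℝ) * (l.choose r : ℝ) * x^l * (1-x)^(k-l)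
      = (k.choose r : ℝ) * x^r := by
  have h1 : ∑ l ∈ Finset.Ico r (k+1), (k.choose l : ℝ) * (l.choose r : ℝ) * x^l * (1-x)^(k-l)
      = ∑ l ∈ range (k+1), (k.choose l : ℝ) * (l.choose r : ℝ) * x^l * (1-x)^(k-l) := by
    apply Finset.sum_subset
    · intro l hl
      rw [mem_range]; exact (Finset.mem_Ico.mp hl).2
    · intro l hl hnl
      have : l < r := by
        rw [mem_range] at hl; rw [Finset.mem_Ico] at hnl; omega
      simp [Nat.choose_eq_zero_of_lt this]
  rw [← h1, Finset.sum_Ico_eq_sum_range]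
  have hkr : k + 1 - r = (k - r) + 1 := by omega
  rw [hkr]
  have h2 : ∀ s ∈ range ((k-r)+1),
      (k.choose (r+s) : ℝ) * ((r+s).choose r : ℝ) * x^(r+s) * (1-x)^(k-(r+s))
        = (k.choose r : ℝ) * x^r * (x^s * (1-x)^((k-r)-s) * ((k-r).choose s : ℝ)) := by
    intro s hs
    have hsk : s ≤ k - r := Nat.lt_succ_iff.mp (mem_range.mp hs)
    have hrs : r + s ≤ k := by omega
    have hc := Nat.choose_mul (n := k) (Nat.le_add_right r s)
    have hss : r + s - r = s := by omega
    rw [hss] at hc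
    have hc' : (k.choose (r+s) : ℝ) * ((r+s).choose r : ℝ)
        = (k.choose r : ℝ) * ((k-r).choose s : ℝ) := by
      exact_mod_cast congrArg (fun z : ℕ => (z : ℝ)) hc
    have he : k - (r+s) = (k-r) - s := by omega
    rw [he, pow_add]
    linear_combination (x ^ r * x ^ s * (1-x)^((k-r)-s)) * hc'
  rw [Finset.sum_congr rfl h2, ← Finset.mul_sum]
  have := add_pow x (1-x) (k-r)
  simp only [add_sub_cancel, one_pow] at this
  rw [← this]
  norm_num

lemma key_identity (x : ℝ) (k m : ℕ) :
    ∑ j ∈ range (k+1), (k.choose j : ℝ) * (-1)^j * (j:ℝ)^m * x^j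
      = ∑ l ∈ range (k+1),
          stirling2 m l * (k.choose l : ℝ) * (Nat.factorial l : ℝ) * (-x)^l * (1-x)^(k-l) := by
  symm
  calc ∑ l ∈ range (k+1),
          stirling2 m l * (k.choose l : ℝ) * (Nat.factorial l : ℝ) * (-x)^l * (1-x)^(k-l)
      = ∑ l ∈ range (k+1), ∑ r ∈ range (k+1),
          ((-1:ℝ)^r * (l.choose r : ℝ) * (r:ℝ)^m) * (k.choose l : ℝ) * x^l * (1-x)^(k-l) := by
        apply Finset.sum_congr rfl
        intro l hl
        have hfac : (Nat.factorial l : ℝ) ≠ 0 := Nat.cast_ne_zero.mpr (Nat.factorial_ne_zero l)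
        have h1 : stirling2 m l * (Nat.factorial l : ℝ)
            = ∑ j ∈ range (l+1), (-1:ℝ)^j * (l.choose j : ℝ) * ((l:ℝ) - j)^m := by
          rw [stirling2]; field_simp
        have h3 : ∑ r ∈ range (l+1), (-1:ℝ)^r * (l.choose r : ℝ) * (r:ℝ)^m
            = ∑ r ∈ range (k+1), (-1:ℝ)^r * (l.choose r : ℝ) * (r:ℝ)^m := by
          apply Finset.sum_subset (Finset.range_subset_range.mpr (by
            have := mem_range.mp hl; omega))
          intro r hr hnr
          have : l < r := by rw [mem_range] at hr; rw [mem_range] at hnr; omega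
          simp [Nat.choose_eq_zero_of_lt this]
        have hxl : ((-1:ℝ))^l * (-x)^l = x^l := by
          rw [← mul_pow, neg_one_mul, neg_neg]
        calc stirling2 m l * (k.choose l : ℝ) * (Nat.factorial l : ℝ) * (-x)^l * (1-x)^(k-l)
            = (stirling2 m l * (Nat.factorial l : ℝ)) * (k.choose l : ℝ) * (-x)^l
                * (1-x)^(k-l) := by ring
          _ = ((-1:ℝ)^l * ∑ r ∈ range (k+1), (-1:ℝ)^r * (l.choose r : ℝ) * (r:ℝ)^m)
                * (k.choose l : ℝ) * (-x)^l * (1-x)^(k-l) := by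
              rw [h1, sieve_reflect, h3]
          _ = (∑ r ∈ range (k+1), (-1:ℝ)^r * (l.choose r : ℝ) * (r:ℝ)^m)
                * ((-1:ℝ)^l * (-x)^l) * ((k.choose l : ℝ) * (1-x)^(k-l)) := by ring
          _ = ∑ r ∈ range (k+1),
                ((-1:ℝ)^r * (l.choose r : ℝ) * (r:ℝ)^m) * (k.choose l : ℝ) * x^l
                  * (1-x)^(k-l) := by
              rw [hxl, Finset.sum_mul, Finset.sum_mul]
              apply Finset.sum_congr rfl
              intro r _; ring
    _ = ∑ r ∈ range (k+1), ((-1:ℝ)^r * (r:ℝ)^m) *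
          ∑ l ∈ range (k+1), (k.choose l : ℝ) * (l.choose r : ℝ) * x^l * (1-x)^(k-l) := by
        rw [Finset.sum_comm]
        apply Finset.sum_congr rfl
        intro r _
        rw [Finset.mul_sum]
        apply Finset.sum_congr rfl
        intro l _; ring
    _ = ∑ r ∈ range (k+1), ((-1:ℝ)^r * (r:ℝ)^m) * ((k.choose r : ℝ) * x^r) := by
        apply Finset.sum_congr rfl
        intro r hr
        rw [innerBinSum x k r (Nat.lt_succ_iff.mp (mem_range.mp hr))]
    _ = ∑ j ∈ range (k+1), (k.choose j : ℝ) * (-1)^j * (j:ℝ)^m * x^j := by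
        apply Finset.sum_congr rfl
        intro r _; ring

/-- For `n ≥ 1`, `k ≥ 1`, `m ≥ 0`,
`Σ_{j=0}^{k} C(k,j)(−1)^j j^m e^{−(n/k)j}
  = (1 − e^{−n/k})^k · Σ_{l=0}^{min(m,k)} Stirling(m,l)·C(k,l)·l!·(−Λ)^l`,
where `Λ := e^{−n/k}/(1 − e^{−n/k})` and `0^0 = 1`. -/
theorem charlier_sum_identity (n k m : ℕ) (hn : 1 ≤ n) (hk : 1 ≤ k) :
    ∑ j ∈ Finset.range (k + 1),
        (k.choose j : ℝ) * (-1) ^ j * (j : ℝ) ^ m * Real.exp (-((n : ℝ) / k) * j) =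
      (1 - Real.exp (-(n : ℝ) / k)) ^ k *
        ∑ l ∈ Finset.range (min m k + 1),
          stirling2 m l * (k.choose l : ℝ) * (Nat.factorial l : ℝ) *
            (-(Real.exp (-(n : ℝ) / k) / (1 - Real.exp (-(n : ℝ) / k)))) ^ l := by
  set X : ℝ := Real.exp (-(n : ℝ) / k) with hXdef
  have hX1 : X < 1 := by
    rw [hXdef]
    apply Real.exp_lt_one_iff.mpr
    have hn' : (0:ℝ) < n := by exact_mod_cast hn
    have hk' : (0:ℝ) < k := by exact_mod_cast hk
    rw [neg_div]
    have hpos : (0:ℝ) < (n:ℝ)/(k:ℝ) := by positivity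
    linarith
  have hne : (1 : ℝ) - X ≠ 0 := by
    intro h; nlinarith
  have hexp : ∀ j : ℕ, Real.exp (-((n : ℝ) / k) * j) = X ^ j := by
    intro j
    rw [hXdef, ← Real.exp_nat_mul]
    congr 1
    ring
  have hLHS : ∑ j ∈ Finset.range (k + 1),
      (k.choose j : ℝ) * (-1) ^ j * (j : ℝ) ^ m * Real.exp (-((n : ℝ) / k) * j)
      = ∑ j ∈ Finset.range (k + 1),
          (k.choose j : ℝ) * (-1) ^ j * (j : ℝ) ^ m * X ^ j := by
    apply Finset.sum_congr rfl
    intro j _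
    rw [hexp j]
  have hext : ∑ l ∈ Finset.range (min m k + 1),
        stirling2 m l * (k.choose l : ℝ) * (Nat.factorial l : ℝ) * (-(X / (1 - X))) ^ l
      = ∑ l ∈ Finset.range (k + 1),
          stirling2 m l * (k.choose l : ℝ) * (Nat.factorial l : ℝ) * (-(X / (1 - X))) ^ l := by
    apply Finset.sum_subset (Finset.range_subset_range.mpr (by omega))
    intro l hl hnl
    rw [Finset.mem_range] at hl hnl
    have hml : m < l := by omega
    rw [stirling2_eq_zero hml]
    ring
  rw [hLHS, hext, Finset.mul_sum, key_identity X k m]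
  apply Finset.sum_congr rfl
  intro l hl
  have hlk : l ≤ k := Nat.lt_succ_iff.mp (Finset.mem_range.mp hl)
  have hpow : (1 - X) ^ (k - l) * (1 - X) ^ l = (1 - X) ^ k := by
    rw [← pow_add]
    congr 1
    omega
  have hd : (-(X / (1 - X))) ^ l = (-X) ^ l / (1 - X) ^ l := by
    rw [← neg_div, div_pow]
  rw [hd, ← hpow]
  field_simp
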